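/- For every integer ℓ ≥ 1, one has P¹_x(2^ℓ) = 4, Δ₀(2^ℓ) = 2, M₀(2^{ℓ+1}) = 2^ℓ − m₀(2^ℓ), and m₀(2^{ℓ+1}) = 2^ℓ − M₀(2^ℓ). -/

import Mathlib

/-- The 2-kernel of a sequence `s : ℕ → ℤ`. -/
def kernel2 (s : ℕ → ℤ) : Set (ℕ → ℤ) :=
  {t | ∃ i j : ℕ, j < 2 ^ i ∧ t = fun n => s (2 ^ i * n + j)}

/-- A sequence is 2-regular if the ℤ-module spanned by its 2-kernel is finitely generated. -/
def IsTwoRegular (s : ℕ → ℤ) : Prop :=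
  (Submodule.span ℤ (kernel2 s)).FG

/-- A sequence is 2-automatic if its 2-kernel is finite. -/
def IsTwoAutomatic (s : ℕ → ℤ) : Prop :=
  (kernel2 s).Finite

/-- The period-doubling word, fixed point (starting with 0) of 0 ↦ 01, 1 ↦ 00:
its `n`-th letter is the parity of the 2-adic valuation of `n+1`. -/
def pd (n : ℕ) : ℕ := (n + 1).factorization 2 % 2

/-- The Thue–Morse word, fixed point (starting with 0) of 0 ↦ 01, 1 ↦ 10:
its `n`-th letter is the parity of the binary digit sum of `n`. -/
def tm (n : ℕ) : ℕ := (Nat.digits 2 n).sum % 2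

/-- The 2-block coding `x = block(p, 2)` of the period-doubling word. -/
def xw (n : ℕ) : ℕ := 2 * pd n + pd (n + 1)

/-- The 2-block coding `y = block(t, 2)` of the Thue–Morse word. -/
def yw (n : ℕ) : ℕ := 2 * tm n + tm (n + 1)

/-- The factor of an infinite word `w` of length `len` occurring at position `i`. -/
def factorAt (w : ℕ → ℕ) (i len : ℕ) : List ℕ :=
  (List.range len).map fun k => w (i + k)

/-- `u` is a factor of the infinite word `w`. -/
def IsFactor (w : ℕ → ℕ) (u : List ℕ) : Prop :=
  ∃ i, u = factorAt w i u.length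

/-- Maximal number of 0's in a factor of `x` of length `n`. -/
noncomputable def M0 (n : ℕ) : ℕ := sSup {k | ∃ i, (factorAt xw i n).count 0 = k}

/-- Minimal number of 0's in a factor of `x` of length `n`. -/
noncomputable def m0 (n : ℕ) : ℕ := sInf {k | ∃ i, (factorAt xw i n).count 0 = k}

noncomputable def D0 (n : ℕ) : ℕ := M0 n - m0 n

/-- Maximal number of 2's in a factor of `x` of length `n`. -/
noncomputable def M2c (n : ℕ) : ℕ := sSup {k | ∃ i, (factorAt xw i n).count 2 = k}

/-- Minimal number of 2's in a factor of `x` of length `n`. -/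
noncomputable def m2c (n : ℕ) : ℕ := sInf {k | ∃ i, (factorAt xw i n).count 2 = k}

/-- The max-jump function for `M0`. -/
noncomputable def JM0 : ℕ → ℕ
  | 0 => 0
  | n + 1 => if M0 n < M0 (n + 1) then 1 else 0

/-- The min-jump function for `m0`. -/
noncomputable def jm0 (n : ℕ) : ℕ := if m0 n < m0 (n + 1) then 1 else 0

/-- Maximal total number of 1's and 2's in a factor of `y` of length `n`. -/
noncomputable def M12 (n : ℕ) : ℕ :=
  sSup {k | ∃ i, (factorAt yw i n).count 1 + (factorAt yw i n).count 2 = k}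

/-- Minimal total number of 1's and 2's in a factor of `y` of length `n`. -/
noncomputable def m12 (n : ℕ) : ℕ :=
  sInf {k | ∃ i, (factorAt yw i n).count 1 + (factorAt yw i n).count 2 = k}

noncomputable def D12 (n : ℕ) : ℕ := M12 n - m12 n

/-- Maximal total number of 0's and 3's in a factor of `y` of length `n`. -/
noncomputable def M03 (n : ℕ) : ℕ :=
  sSup {k | ∃ i, (factorAt yw i n).count 0 + (factorAt yw i n).count 3 = k}

/-- Minimal total number of 0's and 3's in a factor of `y` of length `n`. -/
noncomputable def m03 (n : ℕ) : ℕ :=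
  sInf {k | ∃ i, (factorAt yw i n).count 0 + (factorAt yw i n).count 3 = k}

/-- The max-jump function for `M03`. -/
noncomputable def JM03 (n : ℕ) : ℕ := if M03 (n - 1) < M03 n then 1 else 0

/-- The min-jump function for `m03`. -/
noncomputable def jm03 (n : ℕ) : ℕ := if m03 n < m03 (n + 1) then 1 else 0

/-- Abelian complexity: the number of abelian equivalence classes (i.e. distinct
multisets of letters) of factors of `w` of length `n`. -/
noncomputable def abComplexity (w : ℕ → ℕ) (n : ℕ) : ℕ :=
  Set.ncard {m : Multiset ℕ | ∃ i, (↑(factorAt w i n) : Multiset ℕ) = m}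

/-- The number of occurrences of `v` as a factor of `u`. -/
def countFactor (u v : List ℕ) : ℕ :=
  ((List.range (u.length + 1 - v.length)).filter
    fun i => decide ((u.drop i).take v.length = v)).length

/-- 2-abelian complexity: the number of 2-abelian equivalence classes of factors of `w`
of length `n`, where two words are 2-abelian equivalent when every word of length at most 2
occurs equally often in both. -/
noncomputable def abel2Complexity (w : ℕ → ℕ) (n : ℕ) : ℕ :=
  Set.ncard {f : List ℕ → ℕ |
    ∃ i, f = fun v => if v.length ≤ 2 then countFactor (factorAt w i n) v else 0}

/-- The morphism φ : 0 ↦ 12, 1 ↦ 12, 2 ↦ 00. -/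
def phiL : ℕ → List ℕ
  | 0 => [1, 2]
  | 1 => [1, 2]
  | 2 => [0, 0]
  | _ => []

/-- The morphism τ : 0 ↦ 0, 1 ↦ 2, 2 ↦ 1. -/
def tauL : ℕ → ℕ
  | 1 => 2
  | 2 => 1
  | n => n

abbrev cnt (a i n : ℕ) : ℕ := (factorAt xw i n).count a

lemma pd_le_one (n : ℕ) : pd n ≤ 1 := by unfold pd; omega

lemma pd_even (n : ℕ) : pd (2*n) = 0 := by
  unfold pd
  rw [Nat.factorization_eq_zero_of_not_dvd (by omega)]

lemma pd_odd (n : ℕ) : pd (2*n+1) + pd n = 1 := by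
  unfold pd
  have h : 2*n+1+1 = 2*(n+1) := by ring
  rw [h, Nat.factorization_mul (by norm_num) (Nat.succ_ne_zero n)]
  simp [Nat.Prime.factorization Nat.prime_two]
  omega

lemma pd_adj (n : ℕ) : pd n + pd (n+1) ≤ 1 := by
  rcases Nat.even_or_odd n with ⟨k, hk⟩ | ⟨k, hk⟩
  · have : n = 2*k := by omega
    have h2 := pd_le_one (2*k+1)
    rw [this, pd_even]; omega
  · have : n + 1 = 2*(k+1) := by omega
    have h2 := pd_le_one n
    rw [this, pd_even]; omega

lemma xw_even (j : ℕ) : xw (2*j) + pd j = 1 := by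
  unfold xw
  have h1 := pd_even j
  have h2 := pd_odd j
  omega

lemma xw_odd (j : ℕ) : xw (2*j+1) + 2 * pd j = 2 := by
  unfold xw
  have h1 := pd_odd j
  have h2 : (2*j+1+1) = 2*(j+1) := by ring
  rw [h2, pd_even]
  omega

lemma xw_cases (k : ℕ) : xw k = 0 ∨ xw k = 1 ∨ xw k = 2 := by
  unfold xw
  have := pd_adj k
  omega

lemma b2 (k : ℕ) : (if xw k = 2 then 1 else 0) = pd k := by
  have h := pd_adj k
  have h1 := pd_le_one k
  have h2 := pd_le_one (k+1)
  unfold xw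
  split <;> omega

lemma b0 (k : ℕ) : (if xw k = 0 then 1 else 0) + pd k + pd (k+1) = 1 := by
  have h := pd_adj k
  have h1 := pd_le_one k
  have h2 := pd_le_one (k+1)
  unfold xw
  split <;> omega

lemma factorAt_succ (w : ℕ → ℕ) (i n : ℕ) :
    factorAt w i (n+1) = factorAt w i n ++ [w (i+n)] := by
  simp [factorAt, List.range_succ]

lemma factorAt_zero (w : ℕ → ℕ) (i : ℕ) : factorAt w i 0 = [] := rfl

lemma cnt_zero (a i : ℕ) : cnt a i 0 = 0 := rfl

lemma cnt_succ (a i n : ℕ) :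
    cnt a i (n+1) = cnt a i n + (if xw (i+n) = a then 1 else 0) := by
  unfold cnt
  rw [factorAt_succ, List.count_append]
  simp [List.count_singleton']

lemma cnt_le (a i n : ℕ) : cnt a i n ≤ n := by
  calc cnt a i n ≤ (factorAt xw i n).length := List.count_le_length
  _ = n := by simp [factorAt]

lemma cnt_double_step (a j m : ℕ) :
    cnt a (2*j) (2*(m+1)) = cnt a (2*j) (2*m)
      + (if xw (2*(j+m)) = a then 1 else 0)
      + (if xw (2*(j+m)+1) = a then 1 else 0) := by
  rw [show 2*(m+1) = (2*m+1)+1 by ring, cnt_succ, cnt_succ]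
  rw [show 2*j+2*m = 2*(j+m) by ring, show 2*j+(2*m+1) = 2*(j+m)+1 by ring]

lemma cnt_double_step' (a j m : ℕ) :
    cnt a (2*j+1) (2*(m+1)) = cnt a (2*j+1) (2*m)
      + (if xw (2*(j+m)+1) = a then 1 else 0)
      + (if xw (2*(j+m+1)) = a then 1 else 0) := by
  rw [show 2*(m+1) = (2*m+1)+1 by ring, cnt_succ, cnt_succ]
  rw [show 2*j+1+2*m = 2*(j+m)+1 by ring, show 2*j+1+(2*m+1) = 2*(j+m+1) by ring]

lemma b2_even (j : ℕ) : (if xw (2*j) = 2 then 1 else 0) = 0 := by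
  have := xw_even j; split <;> omega

lemma b2_odd (j : ℕ) : (if xw (2*j+1) = 2 then 1 else 0) + pd j = 1 := by
  have := xw_odd j; have := pd_le_one j; split <;> omega

lemma b0_even (j : ℕ) : (if xw (2*j) = 0 then 1 else 0) = pd j := by
  have := xw_even j; have := pd_le_one j; split <;> omega

lemma b0_odd (j : ℕ) : (if xw (2*j+1) = 0 then 1 else 0) = pd j := by
  have := xw_odd j; have := pd_le_one j; split <;> omega

lemma cnt2_pd (j m : ℕ) : cnt 2 j (m+1) = cnt 2 j m + pd (j+m) := by
  rw [cnt_succ, b2]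

lemma cnt2_even (j m : ℕ) : cnt 2 j m + cnt 2 (2*j) (2*m) = m := by
  induction m with
  | zero => simp [cnt_zero]
  | succ m ih =>
    rw [cnt_double_step, cnt2_pd, b2_even]
    have h1 := b2_odd (j+m)
    omega

lemma cnt2_odd (j m : ℕ) : cnt 2 j m + cnt 2 (2*j+1) (2*m) = m := by
  induction m with
  | zero => simp [cnt_zero]
  | succ m ih =>
    rw [cnt_double_step', cnt2_pd, b2_even]
    have h1 := b2_odd (j+m)
    omega

lemma cnt0_even (j m : ℕ) : cnt 0 (2*j) (2*m) = 2 * cnt 2 j m := by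
  induction m with
  | zero => simp [cnt_zero]
  | succ m ih =>
    rw [cnt_double_step, cnt2_pd, b0_even, b0_odd]
    omega

lemma cnt0_odd (j m : ℕ) : cnt 0 (2*j+1) (2*m) + pd j = 2 * cnt 2 j m + pd (j+m) := by
  induction m with
  | zero => simp [cnt_zero]
  | succ m ih =>
    rw [cnt_double_step', cnt2_pd, b0_odd, b0_even]
    have hx : pd (j+(m+1)) = pd (j+m+1) := rfl
    omega

structure Good (n p q : ℕ) : Prop where
  hA : ∀ j, cnt 2 j n = q ∨ cnt 2 j n = q + 1
  hB : ∀ j, q + pd j ≤ cnt 2 j n + pd (j + n) ∧ cnt 2 j n + pd (j + n) ≤ q + pd j + 1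
  hC : ∃ j, cnt 2 j n = q ∧ pd j = 0 ∧ pd (j + n) = 1
  hD : ∃ j, cnt 2 j n = q + 1 ∧ pd j = 1 ∧ pd (j + n) = 0
  hE : ∀ i, (cnt 0 i n = p ∧ cnt 2 i n = q+1) ∨ (cnt 0 i n = p+1 ∧ cnt 2 i n = q)
      ∨ (cnt 0 i n = p+1 ∧ cnt 2 i n = q+1) ∨ (cnt 0 i n = p+2 ∧ cnt 2 i n = q)
  hF1 : ∃ i, cnt 0 i n = p ∧ cnt 2 i n = q+1
  hF2 : ∃ i, cnt 0 i n = p+1 ∧ cnt 2 i n = q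
  hF3 : ∃ i, cnt 0 i n = p+1 ∧ cnt 2 i n = q+1
  hF4 : ∃ i, cnt 0 i n = p+2 ∧ cnt 2 i n = q
  hG : p + 2*q + 2 = n

lemma pdv : pd 0 = 0 ∧ pd 1 = 1 ∧ pd 2 = 0 ∧ pd 3 = 0 ∧ pd 4 = 0 ∧ pd 5 = 1 := by
  have h0 : pd (2*0) = 0 := pd_even 0
  have h2 : pd (2*1) = 0 := pd_even 1
  have h4 : pd (2*2) = 0 := pd_even 2
  have h1 : pd (2*0+1) + pd 0 = 1 := pd_odd 0
  have h3 : pd (2*1+1) + pd 1 = 1 := pd_odd 1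
  have h5 : pd (2*2+1) + pd 2 = 1 := pd_odd 2
  norm_num at h0 h1 h2 h3 h4 h5
  refine ⟨h0, ?_, h2, ?_, h4, ?_⟩ <;> omega

lemma cnt2_two (j : ℕ) : cnt 2 j 2 = pd j + pd (j+1) := by
  have h1 : cnt 2 j 2 = cnt 2 j 1 + pd (j+1) := cnt2_pd j 1
  have h0 : cnt 2 j 1 = cnt 2 j 0 + pd j := cnt2_pd j 0
  have hz : cnt 2 j 0 = 0 := cnt_zero 2 j
  omega

lemma cnt0_two (j : ℕ) : cnt 0 j 2
    = (if xw j = 0 then 1 else 0) + (if xw (j+1) = 0 then 1 else 0) := by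
  have h1 : cnt 0 j 2 = cnt 0 j 1 + (if xw (j+1) = 0 then 1 else 0) := cnt_succ 0 j 1
  have h0 : cnt 0 j 1 = cnt 0 j 0 + (if xw j = 0 then 1 else 0) := cnt_succ 0 j 0
  have hz : cnt 0 j 0 = 0 := cnt_zero 0 j
  omega

lemma good_one : Good 2 0 0 := by
  obtain ⟨v0, v1, v2, v3, v4, v5⟩ := pdv
  have x0 : xw 0 = 1 := by show 2 * pd 0 + pd 1 = 1; rw [v0, v1]
  have x1 : xw 1 = 2 := by show 2 * pd 1 + pd 2 = 2; rw [v1, v2]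
  have x2 : xw 2 = 0 := by show 2 * pd 2 + pd 3 = 0; rw [v2, v3]
  have x3 : xw 3 = 0 := by show 2 * pd 3 + pd 4 = 0; rw [v3, v4]
  have x4 : xw 4 = 1 := by show 2 * pd 4 + pd 5 = 1; rw [v4, v5]
  refine ⟨?_, ?_, ?_, ?_, ?_, ?_, ?_, ?_, ?_, rfl⟩
  · intro j
    have h := cnt2_two j
    have := pd_adj j
    omega
  · intro j
    have h := cnt2_two j
    have h1 := pd_adj j
    have h2 : pd (j+1) + pd (j+2) ≤ 1 := pd_adj (j+1)
    have h3 : pd (j+1+1) = pd (j+2) := rfl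
    omega
  · refine ⟨3, ?_, v3, ?_⟩
    · have h : cnt 2 3 2 = pd 3 + pd 4 := cnt2_two 3
      omega
    · show pd 5 = 1; exact v5
  · refine ⟨1, ?_, v1, ?_⟩
    · have h : cnt 2 1 2 = pd 1 + pd 2 := cnt2_two 1
      omega
    · show pd 3 = 0; exact v3
  · intro i
    have h2 := cnt2_two i
    have h0 := cnt0_two i
    have c1 := b0 i
    have c2 : (if xw (i+1) = 0 then 1 else 0) + pd (i+1) + pd (i+2) = 1 := b0 (i+1)
    have hab := pd_adj i
    have hbc : pd (i+1) + pd (i+2) ≤ 1 := pd_adj (i+1)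
    have h1 := pd_le_one i
    have hb1 := pd_le_one (i+1)
    have hc1 := pd_le_one (i+2)
    omega
  · refine ⟨0, ?_, ?_⟩
    · have h : cnt 0 0 2 = (if xw 0 = 0 then 1 else 0) + (if xw 1 = 0 then 1 else 0) :=
        cnt0_two 0
      rw [x0, x1] at h; norm_num at h; omega
    · have h : cnt 2 0 2 = pd 0 + pd 1 := cnt2_two 0
      omega
  · refine ⟨3, ?_, ?_⟩
    · have h : cnt 0 3 2 = (if xw 3 = 0 then 1 else 0) + (if xw 4 = 0 then 1 else 0) :=
        cnt0_two 3
      rw [x3, x4] at h; norm_num at h; omega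
    · have h : cnt 2 3 2 = pd 3 + pd 4 := cnt2_two 3
      omega
  · refine ⟨1, ?_, ?_⟩
    · have h : cnt 0 1 2 = (if xw 1 = 0 then 1 else 0) + (if xw 2 = 0 then 1 else 0) :=
        cnt0_two 1
      rw [x1, x2] at h; norm_num at h; omega
    · have h : cnt 2 1 2 = pd 1 + pd 2 := cnt2_two 1
      omega
  · refine ⟨2, ?_, ?_⟩
    · have h : cnt 0 2 2 = (if xw 2 = 0 then 1 else 0) + (if xw 3 = 0 then 1 else 0) :=
        cnt0_two 2
      rw [x2, x3] at h; norm_num at h; omega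
    · have h : cnt 2 2 2 = pd 2 + pd 3 := cnt2_two 2
      omega

lemma good_step {n p q q' : ℕ} (h : Good n p q) (hq' : q' + q + 1 = n) :
    Good (2*n) (2*q) q' := by
  have podd : ∀ j : ℕ, pd (2*j+1) + pd j = 1 := pd_odd
  have peven : ∀ j : ℕ, pd (2*j) = 0 := pd_even
  refine ⟨?_, ?_, ?_, ?_, ?_, ?_, ?_, ?_, ?_, by omega⟩
  · intro i
    rcases Nat.even_or_odd i with ⟨j, hj⟩ | ⟨j, hj⟩
    · have hi : i = 2*j := by omega
      subst hi
      have hd := cnt2_even j n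
      rcases h.hA j with h' | h' <;> omega
    · subst hj
      have hd := cnt2_odd j n
      rcases h.hA j with h' | h' <;> omega
  · intro i
    rcases Nat.even_or_odd i with ⟨j, hj⟩ | ⟨j, hj⟩
    · have hi : i = 2*j := by omega
      subst hi
      have hd := cnt2_even j n
      have p1 := peven j
      have p2 : pd (2*j + 2*n) = 0 := by
        rw [show 2*j + 2*n = 2*(j+n) by ring]; exact peven _
      rcases h.hA j with h' | h' <;> omega
    · subst hj
      have hd := cnt2_odd j n
      have p1 := podd j
      have p2 : pd (2*j+1 + 2*n) + pd (j+n) = 1 := by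
        rw [show 2*j+1 + 2*n = 2*(j+n)+1 by ring]; exact podd _
      have hb := h.hB j
      omega
  · obtain ⟨j, e1, e2, e3⟩ := h.hD
    refine ⟨2*j+1, ?_, ?_, ?_⟩
    · have hd := cnt2_odd j n; omega
    · have p1 := podd j; omega
    · have p2 : pd (2*j+1 + 2*n) + pd (j+n) = 1 := by
        rw [show 2*j+1 + 2*n = 2*(j+n)+1 by ring]; exact podd _
      omega
  · obtain ⟨j, e1, e2, e3⟩ := h.hC
    refine ⟨2*j+1, ?_, ?_, ?_⟩
    · have hd := cnt2_odd j n; omega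
    · have p1 := podd j; omega
    · have p2 : pd (2*j+1 + 2*n) + pd (j+n) = 1 := by
        rw [show 2*j+1 + 2*n = 2*(j+n)+1 by ring]; exact podd _
      omega
  · intro i
    rcases Nat.even_or_odd i with ⟨j, hj⟩ | ⟨j, hj⟩
    · have hi : i = 2*j := by omega
      subst hi
      have hd0 := cnt0_even j n
      have hd2 := cnt2_even j n
      rcases h.hA j with h' | h' <;> omega
    · subst hj
      have hd0 := cnt0_odd j n
      have hd2 := cnt2_odd j n
      have hb := h.hB j
      have ha := h.hA j
      have hp1 := pd_le_one j
      have hp2 := pd_le_one (j+n)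
      omega
  · obtain ⟨j, e1, e2, e3⟩ := h.hC
    refine ⟨2*j, ?_, ?_⟩
    · have hd0 := cnt0_even j n; omega
    · have hd2 := cnt2_even j n; omega
  · obtain ⟨j, e1, e2, e3⟩ := h.hD
    refine ⟨2*j+1, ?_, ?_⟩
    · have hd0 := cnt0_odd j n; omega
    · have hd2 := cnt2_odd j n; omega
  · obtain ⟨j, e1, e2, e3⟩ := h.hC
    refine ⟨2*j+1, ?_, ?_⟩
    · have hd0 := cnt0_odd j n; omega
    · have hd2 := cnt2_odd j n; omega
  · obtain ⟨j, e1, e2, e3⟩ := h.hD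
    refine ⟨2*j, ?_, ?_⟩
    · have hd0 := cnt0_even j n; omega
    · have hd2 := cnt2_even j n; omega

lemma good_pow : ∀ l : ℕ, 1 ≤ l → ∃ p q : ℕ, Good (2^l) p q := by
  intro l hl
  induction l with
  | zero => omega
  | succ l ih =>
    rcases Nat.eq_or_lt_of_le hl with h1 | h1
    · have hl0 : l = 0 := by omega
      subst hl0
      refine ⟨0, 0, ?_⟩
      have e : (2:ℕ)^(0+1) = 2 := by norm_num
      rw [e]
      exact good_one
    · obtain ⟨p, q, hg⟩ := ih (by omega)
      obtain ⟨j, e1, _, _⟩ := hg.hD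
      have hle : q + 1 ≤ 2^l := e1 ▸ cnt_le 2 j (2^l)
      refine ⟨2*q, 2^l - 1 - q, ?_⟩
      have := good_step hg (q' := 2^l - 1 - q) (by omega)
      rwa [pow_succ, mul_comm]

lemma M0_eq {n p q : ℕ} (h : Good n p q) : M0 n = p + 2 := by
  unfold M0
  have hne : {k | ∃ i, (factorAt xw i n).count 0 = k}.Nonempty := ⟨_, ⟨0, rfl⟩⟩
  apply le_antisymm
  · apply csSup_le hne
    rintro k ⟨i, rfl⟩
    have hh := h.hE i
    simp only [cnt] at hh
    omega
  · apply le_csSup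
    · refine ⟨p + 2, ?_⟩
      rintro k ⟨i, rfl⟩
      have hh := h.hE i
      simp only [cnt] at hh
      omega
    · obtain ⟨i, hi1, _⟩ := h.hF4
      exact ⟨i, hi1⟩

lemma m0_eq {n p q : ℕ} (h : Good n p q) : m0 n = p := by
  unfold m0
  apply le_antisymm
  · obtain ⟨i, hi1, _⟩ := h.hF1
    exact csInf_le (OrderBot.bddBelow _) ⟨i, hi1⟩
  · have hne : {k | ∃ i, (factorAt xw i n).count 0 = k}.Nonempty := ⟨_, ⟨0, rfl⟩⟩
    apply le_csInf hne
    rintro k ⟨i, rfl⟩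
    have hh := h.hE i
    simp only [cnt] at hh
    omega

def Wm (a c b : ℕ) : Multiset ℕ :=
  Multiset.replicate a 0 + Multiset.replicate c 1 + Multiset.replicate b 2

lemma Wm_add0 (a c b : ℕ) : Wm a c b + {(0:ℕ)} = Wm (a+1) c b := by
  unfold Wm
  rw [Multiset.replicate_succ, ← Multiset.singleton_add]
  abel

lemma Wm_add1 (a c b : ℕ) : Wm a c b + {(1:ℕ)} = Wm a (c+1) b := by
  unfold Wm
  rw [Multiset.replicate_succ, ← Multiset.singleton_add]
  abel

lemma Wm_add2 (a c b : ℕ) : Wm a c b + {(2:ℕ)} = Wm a c (b+1) := by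
  unfold Wm
  rw [Multiset.replicate_succ, ← Multiset.singleton_add]
  abel

lemma Wm_count0 (a c b : ℕ) : Multiset.count 0 (Wm a c b) = a := by
  simp [Wm, Multiset.count_replicate]

lemma Wm_count2 (a c b : ℕ) : Multiset.count 2 (Wm a c b) = b := by
  simp [Wm, Multiset.count_replicate]

lemma Wm_inj {a c b a' c' b' : ℕ} (h : Wm a c b = Wm a' c' b') : a = a' ∧ b = b' := by
  constructor
  · have := congrArg (Multiset.count 0) h
    rwa [Wm_count0, Wm_count0] at this
  · have := congrArg (Multiset.count 2) h
    rwa [Wm_count2, Wm_count2] at this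

lemma factor_eq_Wm (i n : ℕ) :
    (↑(factorAt xw i n) : Multiset ℕ) = Wm (cnt 0 i n) (cnt 1 i n) (cnt 2 i n) := by
  induction n with
  | zero => simp [factorAt_zero, Wm, cnt_zero]
  | succ n ih =>
    rw [factorAt_succ]
    rw [show ((↑(factorAt xw i n ++ [xw (i+n)]) : Multiset ℕ))
        = ↑(factorAt xw i n) + ↑([xw (i+n)]) from Multiset.coe_add _ _]
    rw [ih, cnt_succ 0 i n, cnt_succ 1 i n, cnt_succ 2 i n]
    rcases xw_cases (i+n) with hx | hx | hx <;> rw [hx] <;> norm_num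
    · exact Wm_add0 _ _ _
    · exact Wm_add1 _ _ _
    · exact Wm_add2 _ _ _

lemma cnt_total (i n : ℕ) : cnt 0 i n + cnt 1 i n + cnt 2 i n = n := by
  induction n with
  | zero => simp [cnt_zero]
  | succ n ih =>
    rw [cnt_succ 0 i n, cnt_succ 1 i n, cnt_succ 2 i n]
    rcases xw_cases (i+n) with hx | hx | hx <;> rw [hx] <;> norm_num <;> omega

lemma ab_eq {n p q : ℕ} (h : Good n p q) : abComplexity xw n = 4 := by
  unfold abComplexity
  have hset : {m : Multiset ℕ | ∃ i, (↑(factorAt xw i n) : Multiset ℕ) = m}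
      = {Wm p (q+1) (q+1), Wm (p+1) (q+1) q, Wm (p+1) q (q+1), Wm (p+2) q q} := by
    ext m
    simp only [Set.mem_setOf_eq, Set.mem_insert_iff, Set.mem_singleton_iff]
    constructor
    · rintro ⟨i, rfl⟩
      rw [factor_eq_Wm]
      have hE := h.hE i
      have ht := cnt_total i n
      have hG := h.hG
      rcases hE with ⟨e0, e2⟩ | ⟨e0, e2⟩ | ⟨e0, e2⟩ | ⟨e0, e2⟩
      · exact Or.inl (by rw [e0, e2, show cnt 1 i n = q+1 by omega])
      · exact Or.inr (Or.inl (by rw [e0, e2, show cnt 1 i n = q+1 by omega]))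
      · exact Or.inr (Or.inr (Or.inl (by rw [e0, e2, show cnt 1 i n = q by omega])))
      · exact Or.inr (Or.inr (Or.inr (by rw [e0, e2, show cnt 1 i n = q by omega])))
    · have hG := h.hG
      rintro (rfl | rfl | rfl | rfl)
      · obtain ⟨i, e0, e2⟩ := h.hF1
        have ht := cnt_total i n
        exact ⟨i, by rw [factor_eq_Wm, e0, e2, show cnt 1 i n = q+1 by omega]⟩
      · obtain ⟨i, e0, e2⟩ := h.hF2
        have ht := cnt_total i n
        exact ⟨i, by rw [factor_eq_Wm, e0, e2, show cnt 1 i n = q+1 by omega]⟩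
      · obtain ⟨i, e0, e2⟩ := h.hF3
        have ht := cnt_total i n
        exact ⟨i, by rw [factor_eq_Wm, e0, e2, show cnt 1 i n = q by omega]⟩
      · obtain ⟨i, e0, e2⟩ := h.hF4
        have ht := cnt_total i n
        exact ⟨i, by rw [factor_eq_Wm, e0, e2, show cnt 1 i n = q by omega]⟩
  rw [hset]
  have d1 : Wm p (q+1) (q+1) ∉ ({Wm (p+1) (q+1) q, Wm (p+1) q (q+1), Wm (p+2) q q} :
      Set (Multiset ℕ)) := by
    intro hmem
    rcases hmem with hh | hh | hh <;> (have := Wm_inj hh; omega)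
  have d2 : Wm (p+1) (q+1) q ∉ ({Wm (p+1) q (q+1), Wm (p+2) q q} : Set (Multiset ℕ)) := by
    intro hmem
    rcases hmem with hh | hh <;> (have := Wm_inj hh; omega)
  have d3 : Wm (p+1) q (q+1) ≠ Wm (p+2) q q := by
    intro hh; have := Wm_inj hh; omega
  rw [Set.ncard_insert_of_notMem d1, Set.ncard_insert_of_notMem d2, Set.ncard_pair d3]

theorem stmt9 (l : ℕ) (hl : 1 ≤ l) :
    abComplexity xw (2 ^ l) = 4 ∧
    D0 (2 ^ l) = 2 ∧
    M0 (2 ^ (l + 1)) + m0 (2 ^ l) = 2 ^ l ∧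
    m0 (2 ^ (l + 1)) + M0 (2 ^ l) = 2 ^ l := by
  obtain ⟨p, q, hg⟩ := good_pow l hl
  obtain ⟨j, e1, _, _⟩ := hg.hD
  have hle : q + 1 ≤ 2^l := e1 ▸ cnt_le 2 j (2^l)
  have hg2 : Good (2^(l+1)) (2*q) (2^l - 1 - q) := by
    have := good_step hg (q' := 2^l - 1 - q) (by omega)
    rwa [pow_succ, mul_comm]
  have hG := hg.hG
  refine ⟨ab_eq hg, ?_, ?_, ?_⟩
  · unfold D0
    rw [M0_eq hg, m0_eq hg]
    omega
  · rw [M0_eq hg2, m0_eq hg]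
    omega
  · rw [m0_eq hg2, M0_eq hg]
    omega
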